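/- Let n ≥ 1, let a : S_n × S_n × ℝⁿ → [0,1] be a comparison array (measurable in its last argument, antisymmetric, and equivariant), let f be any probability mass function on S_n (possibly non-uniform), let ε be an exchangeable random vector in ℝⁿ, and let σ be a random permutation with distribution f, independent of ε. Define the population p-value p^Pop(σ) = Σ_{π ∈ S_n} f(π)·a(π∘σ⁻¹, Id, ε). Then for every α ∈ [0,1], P(p^Pop(σ) ≤ α) ≤ 2α, where the probability is over both ε and σ. -/

import Mathlib

open MeasureTheory
open scoped Classical ENNReal

/-- **Population p-value validity (possibly non-uniform `f`).**
For a comparison array `a` (values in `[0,1]`, measurable in its last argument,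
antisymmetric, equivariant), a pmf `f` on `S_n`, an exchangeable random vector `ε`,
and a random permutation `σ ~ f` independent of `ε`, the population p-value
`p^Pop(σ) = Σ_π f(π)·a(π∘σ⁻¹, Id, ε)` satisfies `P(p^Pop(σ) ≤ α) ≤ 2α`. -/
theorem population_pvalue_validity
    {n : ℕ} (hn : 1 ≤ n)
    (a : Equiv.Perm (Fin n) → Equiv.Perm (Fin n) → (Fin n → ℝ) → ℝ)
    (ha01 : ∀ τ σ e, a τ σ e ∈ Set.Icc (0 : ℝ) 1)
    (hameas : ∀ τ σ, Measurable (a τ σ))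
    (hasym : ∀ τ σ e, a τ σ e + a σ τ e = 1)
    (haequi : ∀ (π₁ π₂ ρ : Equiv.Perm (Fin n)) (e : Fin n → ℝ),
      a π₁ π₂ (fun i => e (ρ i)) = a (π₁ * ρ⁻¹) (π₂ * ρ⁻¹) e)
    (f : Equiv.Perm (Fin n) → ℝ) (hf0 : ∀ π, 0 ≤ f π)
    (hf1 : ∑ π : Equiv.Perm (Fin n), f π = 1)
    {Ω : Type*} [MeasurableSpace Ω] (P : Measure Ω) [IsProbabilityMeasure P]
    (ε : Ω → Fin n → ℝ) (hε : Measurable ε)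
    (hexch : ∀ π : Equiv.Perm (Fin n),
      Measure.map (fun ω => fun i => ε ω (π i)) P = Measure.map ε P)
    (σ : Ω → Equiv.Perm (Fin n))
    (hσmeas : ∀ τ : Equiv.Perm (Fin n), MeasurableSet {ω | σ ω = τ})
    -- `σ` has distribution `f` and is independent of `ε`:
    (hdist : ∀ s : Set (Fin n → ℝ), MeasurableSet s → ∀ τ : Equiv.Perm (Fin n),
      P {ω | ε ω ∈ s ∧ σ ω = τ} = P {ω | ε ω ∈ s} * ENNReal.ofReal (f τ))
    (α : ℝ) (hα : α ∈ Set.Icc (0 : ℝ) 1) :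
    P {ω | ∑ π : Equiv.Perm (Fin n), f π * a (π * (σ ω)⁻¹) 1 (ε ω) ≤ α}
      ≤ ENNReal.ofReal (2 * α) := by
  classical
  obtain ⟨hα0, hα1⟩ := hα
  -- the "rotated" p-value function
  set q : Equiv.Perm (Fin n) → (Fin n → ℝ) → ℝ :=
    fun τ e => ∑ κ : Equiv.Perm (Fin n), f κ * a κ τ e with hqdef
  have hqmeas : ∀ τ, Measurable (q τ) := fun τ =>
    Finset.measurable_sum _ (fun κ _ => (hameas κ τ).const_mul _)
  set B : Equiv.Perm (Fin n) → Set (Fin n → ℝ) := fun τ => {e | q τ e ≤ α} with hBdef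
  have hBmeas : ∀ τ, MeasurableSet (B τ) := fun τ =>
    measurableSet_le (hqmeas τ) measurable_const
  -- Claim A : p-value at (τ, e) equals q τ (e ∘ τ)
  have hA : ∀ (τ : Equiv.Perm (Fin n)) (e : Fin n → ℝ),
      (∑ π : Equiv.Perm (Fin n), f π * a (π * τ⁻¹) 1 e) = q τ (fun i => e (τ i)) := by
    intro τ e
    refine (Finset.sum_congr rfl (fun κ _ => ?_)).symm
    rw [haequi κ τ τ e]
    simp
  -- decomposition of the event by the value of σ
  set s : Equiv.Perm (Fin n) → Set (Fin n → ℝ) :=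
    fun τ => (fun e : Fin n → ℝ => fun i => e (τ i)) ⁻¹' B τ with hsdef
  have hsmeas : ∀ τ, MeasurableSet (s τ) := fun τ =>
    (measurable_pi_lambda _ fun i => measurable_pi_apply (τ i)) (hBmeas τ)
  set C : Equiv.Perm (Fin n) → Set Ω :=
    fun τ => {ω | ε ω ∈ s τ ∧ σ ω = τ} with hCdef
  have hCmeas : ∀ τ, MeasurableSet (C τ) := by
    intro τ
    have h1 : Measurable (fun ω => ε ω ∈ s τ) := by
      exact measurableSet_setOf.mp (hε (hsmeas τ))
    exact (hε (hsmeas τ)).inter (hσmeas τ)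
  have hEeq : {ω | ∑ π : Equiv.Perm (Fin n), f π * a (π * (σ ω)⁻¹) 1 (ε ω) ≤ α}
      = ⋃ τ, C τ := by
    ext ω
    simp only [Set.mem_setOf_eq, Set.mem_iUnion, hCdef, hsdef, Set.mem_preimage, hBdef]
    constructor
    · intro h
      exact ⟨σ ω, by rwa [hA (σ ω) (ε ω)] at h, rfl⟩
    · rintro ⟨τ, hb, hst⟩
      subst hst
      rwa [hA (σ ω) (ε ω)]
  have hdisj : Pairwise (Function.onFun Disjoint C) := by
    intro τ τ' hne
    refine Set.disjoint_left.mpr ?_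
    rintro ω ⟨_, h1⟩ ⟨_, h2⟩
    exact hne (h1 ▸ h2)
  -- each piece
  have hCval : ∀ τ, P (C τ) = P (ε ⁻¹' B τ) * ENNReal.ofReal (f τ) := by
    intro τ
    have h1 : Measurable (fun ω => fun i => ε ω (τ i)) :=
      measurable_pi_lambda _ fun i => hε.eval
    have h2 : P {ω | ε ω ∈ s τ} = P (ε ⁻¹' B τ) := by
      have e1 : {ω | ε ω ∈ s τ} = (fun ω => fun i => ε ω (τ i)) ⁻¹' B τ := rfl
      rw [e1, ← Measure.map_apply h1 (hBmeas τ), hexch τ,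
        Measure.map_apply hε (hBmeas τ)]
    rw [hCdef]
    simp only []
    rw [hdist (s τ) (hsmeas τ) τ, h2]
  have hPE : P {ω | ∑ π : Equiv.Perm (Fin n), f π * a (π * (σ ω)⁻¹) 1 (ε ω) ≤ α}
      = ∑ τ : Equiv.Perm (Fin n), P (ε ⁻¹' B τ) * ENNReal.ofReal (f τ) := by
    rw [hEeq, measure_iUnion hdisj hCmeas, tsum_fintype]
    exact Finset.sum_congr rfl fun τ _ => hCval τ
  -- real-valued quantities
  set m : Equiv.Perm (Fin n) → ℝ := fun τ => (P (ε ⁻¹' B τ)).toReal with hmdef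
  have hm0 : ∀ τ, 0 ≤ m τ := fun τ => ENNReal.toReal_nonneg
  have hm1 : ∀ τ, m τ ≤ 1 := fun τ => by
    rw [hmdef]
    exact ENNReal.toReal_le_of_le_ofReal one_pos.le (by simpa using prob_le_one)
  set pbar : ℝ := ∑ τ : Equiv.Perm (Fin n), f τ * m τ with hpbardef
  have hpbar0 : 0 ≤ pbar :=
    Finset.sum_nonneg fun τ _ => mul_nonneg (hf0 τ) (hm0 τ)
  have hPE' : P {ω | ∑ π : Equiv.Perm (Fin n), f π * a (π * (σ ω)⁻¹) 1 (ε ω) ≤ α}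
      = ENNReal.ofReal pbar := by
    rw [hPE, hpbardef]
    rw [ENNReal.ofReal_sum_of_nonneg fun τ _ => mul_nonneg (hf0 τ) (hm0 τ)]
    refine Finset.sum_congr rfl fun τ _ => ?_
    rw [ENNReal.ofReal_mul (hf0 τ), mul_comm, hmdef]
    congr 1
    exact (ENNReal.ofReal_toReal (measure_ne_top P _)).symm
  rw [hPE']
  -- it suffices to show pbar ≤ 2α
  refine ENNReal.ofReal_le_ofReal ?_
  -- indicator functions
  set I : Equiv.Perm (Fin n) → Ω → ℝ :=
    fun τ => (ε ⁻¹' B τ).indicator (fun _ => (1:ℝ)) with hIdef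
  have hI01 : ∀ τ ω, I τ ω = 0 ∨ I τ ω = 1 := by
    intro τ ω
    by_cases h : ω ∈ ε ⁻¹' B τ
    · right; simp [hIdef, h]
    · left; simp [hIdef, h]
  have hInonneg : ∀ τ ω, 0 ≤ I τ ω := by
    intro τ ω; rcases hI01 τ ω with h | h <;> rw [h] <;> norm_num
  have hIle1 : ∀ τ ω, I τ ω ≤ 1 := by
    intro τ ω; rcases hI01 τ ω with h | h <;> rw [h] <;> norm_num
  have hImeas : ∀ τ, Measurable (I τ) := fun τ =>
    measurable_const.indicator (hε (hBmeas τ))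
  have hIint : ∀ τ, Integrable (I τ) P := fun τ =>
    (integrable_const (1:ℝ)).indicator (hε (hBmeas τ))
  have hIinteg : ∀ τ, ∫ ω, I τ ω ∂P = m τ := by
    intro τ
    rw [hIdef, hmdef]
    simp [integral_indicator_const (1:ℝ) (hε (hBmeas τ)), Measure.real]
  -- key pointwise fact: I τ ω = 1 → q τ (ε ω) ≤ α
  have hIq : ∀ τ ω, I τ ω = 1 → q τ (ε ω) ≤ α := by
    intro τ ω h
    by_cases hm : ω ∈ ε ⁻¹' B τ
    · exact hm
    · simp [hIdef, hm] at h
  -- G and F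
  set G : Ω → ℝ := fun ω => ∑ τ : Equiv.Perm (Fin n), f τ * I τ ω with hGdef
  set F : Ω → ℝ := fun ω => ∑ τ : Equiv.Perm (Fin n), ∑ τ' : Equiv.Perm (Fin n),
    (f τ * I τ ω) * (f τ' * I τ' ω) * a τ' τ (ε ω) with hFdef
  have hGnonneg : ∀ ω, 0 ≤ G ω := fun ω =>
    Finset.sum_nonneg fun τ _ => mul_nonneg (hf0 τ) (hInonneg τ ω)
  have hGle1 : ∀ ω, G ω ≤ 1 := by
    intro ω
    calc G ω ≤ ∑ τ : Equiv.Perm (Fin n), f τ :=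
          Finset.sum_le_sum fun τ _ => by
            nlinarith [hf0 τ, hIle1 τ ω, hInonneg τ ω]
      _ = 1 := hf1
  have hGmeas : Measurable G :=
    Finset.measurable_sum _ fun τ _ => (hImeas τ).const_mul _
  have hGint : Integrable G P :=
    integrable_finset_sum _ fun τ _ => (hIint τ).const_mul _
  have hGinteg : ∫ ω, G ω ∂P = pbar := by
    rw [hGdef, integral_finset_sum _ fun τ _ => (hIint τ).const_mul _]
    exact Finset.sum_congr rfl fun τ _ => by rw [integral_const_mul, hIinteg τ]
  -- integrability of F and related functions via boundedness
  have bdd_int : ∀ (h : Ω → ℝ), Measurable h → (∀ ω, |h ω| ≤ 1) → Integrable h P := by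
    intro h hm hb
    exact Integrable.mono' (integrable_const 1) hm.aestronglyMeasurable
      (Filter.Eventually.of_forall fun ω => by simpa [Real.norm_eq_abs] using hb ω)
  have hterm_bound : ∀ τ τ' ω, 0 ≤ (f τ * I τ ω) * (f τ' * I τ' ω) * a τ' τ (ε ω) ∧
      (f τ * I τ ω) * (f τ' * I τ' ω) * a τ' τ (ε ω) ≤ (f τ * I τ ω) * (f τ' * I τ' ω) := by
    intro τ τ' ω
    have h1 := ha01 τ' τ (ε ω)
    have h2 : 0 ≤ (f τ * I τ ω) * (f τ' * I τ' ω) :=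
      mul_nonneg (mul_nonneg (hf0 τ) (hInonneg τ ω)) (mul_nonneg (hf0 τ') (hInonneg τ' ω))
    constructor
    · exact mul_nonneg h2 h1.1
    · nlinarith [h1.1, h1.2]
  have hFint : Integrable F P := by
    refine integrable_finset_sum _ fun τ _ => integrable_finset_sum _ fun τ' _ => ?_
    have hmeas : Measurable (fun ω => (f τ * I τ ω) * (f τ' * I τ' ω) * a τ' τ (ε ω)) :=
      (((hImeas τ).const_mul _).mul ((hImeas τ').const_mul _)).mul ((hameas τ' τ).comp hε)
    refine bdd_int _ hmeas fun ω => ?_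
    have h := hterm_bound τ τ' ω
    have hf1τ : f τ ≤ 1 := by
      calc f τ ≤ ∑ κ : Equiv.Perm (Fin n), f κ :=
            Finset.single_le_sum (fun κ _ => hf0 κ) (Finset.mem_univ τ)
        _ = 1 := hf1
    have hf1τ' : f τ' ≤ 1 := by
      calc f τ' ≤ ∑ κ : Equiv.Perm (Fin n), f κ :=
            Finset.single_le_sum (fun κ _ => hf0 κ) (Finset.mem_univ τ')
        _ = 1 := hf1
    have hx1 : f τ * I τ ω ≤ 1 := by nlinarith [hf0 τ, hIle1 τ ω, hInonneg τ ω]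
    have hx0 : 0 ≤ f τ * I τ ω := mul_nonneg (hf0 τ) (hInonneg τ ω)
    have hy1 : f τ' * I τ' ω ≤ 1 := by nlinarith [hf0 τ', hIle1 τ' ω, hInonneg τ' ω]
    have hy0 : 0 ≤ f τ' * I τ' ω := mul_nonneg (hf0 τ') (hInonneg τ' ω)
    have hxy : (f τ * I τ ω) * (f τ' * I τ' ω) ≤ 1 := by nlinarith
    rw [abs_le]
    exact ⟨by linarith [h.1], by linarith [h.2, hxy]⟩
  -- (a) F ≤ α * G pointwise
  have hFleαG : ∀ ω, F ω ≤ α * G ω := by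
    intro ω
    rw [hFdef, hGdef]
    simp only []
    rw [Finset.mul_sum]
    refine Finset.sum_le_sum fun τ _ => ?_
    rcases hI01 τ ω with h | h
    · rw [h]
      simp
    · rw [h]
      have hinner : ∑ τ' : Equiv.Perm (Fin n),
          (f τ * 1) * (f τ' * I τ' ω) * a τ' τ (ε ω) ≤ f τ * α := by
        have : ∑ τ' : Equiv.Perm (Fin n),
            (f τ * 1) * (f τ' * I τ' ω) * a τ' τ (ε ω)
            ≤ ∑ τ' : Equiv.Perm (Fin n), f τ * (f τ' * a τ' τ (ε ω)) := by
          refine Finset.sum_le_sum fun τ' _ => ?_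
          have h1 := ha01 τ' τ (ε ω)
          have hle : f τ' * I τ' ω ≤ f τ' := by
            nlinarith [hf0 τ', hIle1 τ' ω, hInonneg τ' ω]
          have h2 : (f τ' * I τ' ω) * a τ' τ (ε ω) ≤ f τ' * a τ' τ (ε ω) :=
            mul_le_mul_of_nonneg_right hle h1.1
          have h3 := mul_le_mul_of_nonneg_left h2 (hf0 τ)
          nlinarith [h3]
        calc _ ≤ ∑ τ' : Equiv.Perm (Fin n), f τ * (f τ' * a τ' τ (ε ω)) := this
          _ = f τ * q τ (ε ω) := by rw [← Finset.mul_sum]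
          _ ≤ f τ * α := mul_le_mul_of_nonneg_left (hIq τ ω h) (hf0 τ)
      calc ∑ τ' : Equiv.Perm (Fin n), (f τ * 1) * (f τ' * I τ' ω) * a τ' τ (ε ω)
          ≤ f τ * α := hinner
        _ = α * (f τ * 1) := by ring
  -- (b) G² = 2F pointwise
  have hG2F : ∀ ω, (G ω)^2 = 2 * F ω := by
    intro ω
    have hswap : F ω = ∑ τ : Equiv.Perm (Fin n), ∑ τ' : Equiv.Perm (Fin n),
        (f τ * I τ ω) * (f τ' * I τ' ω) * a τ τ' (ε ω) := by
      rw [hFdef]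
      rw [Finset.sum_comm]
      exact Finset.sum_congr rfl fun τ _ => Finset.sum_congr rfl fun τ' _ => by ring
    have h2F : 2 * F ω = ∑ τ : Equiv.Perm (Fin n), ∑ τ' : Equiv.Perm (Fin n),
        (f τ * I τ ω) * (f τ' * I τ' ω) := by
      have e1 : 2 * F ω = F ω + F ω := by ring
      rw [e1]
      nth_rewrite 2 [hswap]
      rw [hFdef]
      simp only []
      rw [← Finset.sum_add_distrib]
      refine Finset.sum_congr rfl fun τ _ => ?_
      rw [← Finset.sum_add_distrib]
      refine Finset.sum_congr rfl fun τ' _ => ?_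
      linear_combination ((f τ * I τ ω) * (f τ' * I τ' ω)) * hasym τ' τ (ε ω)
    rw [h2F, hGdef]
    simp only []
    rw [sq, Finset.sum_mul_sum]
  -- integrability of G²
  have hG2int : Integrable (fun ω => (G ω)^2) P := by
    have : (fun ω => (G ω)^2) = fun ω => 2 * F ω := funext hG2F
    rw [this]
    exact hFint.const_mul 2
  -- (c) Cauchy-Schwarz / variance
  have hvar : pbar^2 ≤ ∫ ω, (G ω)^2 ∂P := by
    have h0 : 0 ≤ ∫ ω, (G ω - pbar)^2 ∂P := integral_nonneg fun ω => sq_nonneg _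
    have i1 : Integrable (fun ω => (2*pbar) * G ω) P := hGint.const_mul (2*pbar)
    have i2 : Integrable (fun ω => (G ω)^2 - (2*pbar) * G ω) P := hG2int.sub i1
    have hexp : ∫ ω, (G ω - pbar)^2 ∂P = (∫ ω, (G ω)^2 ∂P) - pbar^2 := by
      calc ∫ ω, (G ω - pbar)^2 ∂P
          = ∫ ω, ((G ω)^2 - (2*pbar) * G ω) + pbar^2 ∂P := by
            congr 1; funext ω; ring
        _ = (∫ ω, (G ω)^2 - (2*pbar) * G ω ∂P) + ∫ _ω, (pbar^2 : ℝ) ∂P :=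
            integral_add i2 (integrable_const _)
        _ = ((∫ ω, (G ω)^2 ∂P) - ∫ ω, (2*pbar) * G ω ∂P) + pbar^2 := by
            rw [integral_sub hG2int i1, integral_const]
            simp [measure_univ]
        _ = ((∫ ω, (G ω)^2 ∂P) - (2*pbar) * pbar) + pbar^2 := by
            rw [integral_const_mul, hGinteg]
        _ = (∫ ω, (G ω)^2 ∂P) - pbar^2 := by ring
    linarith
  -- (a) integrated
  have hS : ∫ ω, F ω ∂P ≤ α * pbar := by
    calc ∫ ω, F ω ∂P ≤ ∫ ω, α * G ω ∂P :=
          integral_mono hFint (hGint.const_mul α) hFleαG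
      _ = α * pbar := by rw [integral_const_mul, hGinteg]
  have hG2val : ∫ ω, (G ω)^2 ∂P = 2 * ∫ ω, F ω ∂P := by
    have : (fun ω => (G ω)^2) = fun ω => 2 * F ω := funext hG2F
    rw [this, integral_const_mul]
  -- conclude : pbar² ≤ 2 α pbar hence pbar ≤ 2α
  have hkey : pbar^2 ≤ 2 * α * pbar := by
    calc pbar^2 ≤ ∫ ω, (G ω)^2 ∂P := hvar
      _ = 2 * ∫ ω, F ω ∂P := hG2val
      _ ≤ 2 * (α * pbar) := by linarith [hS]
      _ = 2 * α * pbar := by ring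
  rcases eq_or_lt_of_le hpbar0 with h | h
  · linarith
  · have := le_of_mul_le_mul_right (by nlinarith [hkey] : pbar * pbar ≤ (2*α) * pbar) h
    linarith
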